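/- For any closed convex cone K ⊆ ℝⁿ and any vector c ∈ ℝⁿ, the set {X ∈ S^n_+ : Xc ∈ K} is a rank-one generated closed convex cone. -/

import Mathlib

open Matrix Set

noncomputable section

/-- The set of rank-one (outer product) matrices `x xᵀ`. -/
def RankOneSet (n : ℕ) : Set (Matrix (Fin n) (Fin n) ℝ) :=
  {X | ∃ x : Fin n → ℝ, X = vecMulVec x x}

/-- A set of PSD matrices is rank-one generated if it equals the convex hull of its
rank-one members. -/
def IsROG {n : ℕ} (S : Set (Matrix (Fin n) (Fin n) ℝ)) : Prop :=
  S = convexHull ℝ (S ∩ RankOneSet n)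

/-- `ℝ₊X` is an extreme ray of `S`: `X ∈ S`, `X ≠ 0`, and whenever `X = (Y+Z)/2` with
`Y, Z ∈ S`, both `Y` and `Z` lie on the ray `ℝ₊X`. -/
def IsExtremeRay' {n : ℕ} (S : Set (Matrix (Fin n) (Fin n) ℝ))
    (X : Matrix (Fin n) (Fin n) ℝ) : Prop :=
  X ∈ S ∧ X ≠ 0 ∧ ∀ Y ∈ S, ∀ Z ∈ S, X = (1/2 : ℝ) • (Y + Z) →
    (∃ α : ℝ, 0 ≤ α ∧ Y = α • X) ∧ (∃ β : ℝ, 0 ≤ β ∧ Z = β • X)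

/-- `S(𝓜) = {X ⪰ 0 : ⟨N, X⟩ ≥ 0 ∀ N ∈ 𝓜}` with the trace inner product. -/
def SCone {n : ℕ} (𝓜 : Set (Matrix (Fin n) (Fin n) ℝ)) : Set (Matrix (Fin n) (Fin n) ℝ) :=
  {X | X.PosSemidef ∧ ∀ N ∈ 𝓜, 0 ≤ (N * X).trace}

/-- `T(𝓜) = {X ⪰ 0 : ⟨N, X⟩ = 0 ∀ N ∈ 𝓜}` with the trace inner product. -/
def TCone {n : ℕ} (𝓜 : Set (Matrix (Fin n) (Fin n) ℝ)) : Set (Matrix (Fin n) (Fin n) ℝ) :=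
  {X | X.PosSemidef ∧ ∀ N ∈ 𝓜, (N * X).trace = 0}

section Aux

variable {n : ℕ}

private lemma vmv_mulVec (x c : Fin n → ℝ) : (vecMulVec x x) *ᵥ c = (x ⬝ᵥ c) • x := by
  funext i
  simp only [mulVec, vecMulVec, dotProduct, Pi.smul_apply, smul_eq_mul, of_apply,
    Finset.sum_mul, Finset.mul_sum]
  exact Finset.sum_congr rfl fun _ _ => by ring

private lemma vmv_psd (x : Fin n → ℝ) : (vecMulVec x x).PosSemidef := by
  rw [vecMulVec_eq (Fin 1)]
  have := Matrix.posSemidef_conjTranspose_mul_self (Matrix.replicateRow (Fin 1) x)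
  convert this using 1
  ext i j
  simp [Matrix.mul_apply]

private lemma vmv_smul (a : ℝ) (x : Fin n → ℝ) :
    vecMulVec (a • x) (a • x) = (a * a) • vecMulVec x x := by
  funext i j
  simp [vecMulVec_apply]
  ring

private lemma tmul_eq_sum (B : Matrix (Fin n) (Fin n) ℝ) :
    Bᵀ * B = ∑ i : Fin n, vecMulVec (B i) (B i) := by
  funext j k
  simp [Matrix.mul_apply, vecMulVec_apply, Matrix.sum_apply, transpose_apply]

private lemma psd_smul {X : Matrix (Fin n) (Fin n) ℝ} (hX : X.PosSemidef) {a : ℝ} (ha : 0 ≤ a) :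
    (a • X).PosSemidef := by
  refine Matrix.PosSemidef.of_dotProduct_mulVec_nonneg ?_ (fun z => ?_)
  · show (a • X)ᴴ = a • X
    rw [conjTranspose_smul, star_trivial, hX.1]
  · have h := hX.dotProduct_mulVec_nonneg z
    rw [smul_mulVec, dotProduct_smul]
    exact mul_nonneg ha h

private lemma sum_mem_convexHull' {E : Type*} [AddCommGroup E] [Module ℝ E] {C : Set E}
    (hC : ∀ e ∈ C, ∀ a : ℝ, 0 ≤ a → a • e ∈ C) {m : ℕ} (hm : 0 < m)
    (f : Fin m → E) (hf : ∀ i, f i ∈ C) : (∑ i, f i) ∈ convexHull ℝ C := by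
  have h := Finset.centerMass_mem_convexHull (Finset.univ : Finset (Fin m))
      (w := fun _ => (1 : ℝ)) (fun _ _ => zero_le_one)
      (by simpa using hm)
      (z := fun i => (m : ℝ) • f i) (fun i _ => hC _ (hf i) _ (Nat.cast_nonneg m))
  have key : (Finset.univ : Finset (Fin m)).centerMass (fun _ => (1 : ℝ))
      (fun i => (m : ℝ) • f i) = ∑ i, f i := by
    have hm0 : ((m : ℝ))⁻¹ * (m : ℝ) = 1 := inv_mul_cancel₀ (by positivity)
    simp [Finset.centerMass, ← Finset.smul_sum, smul_smul, hm0]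
  rwa [key] at h

open scoped MatrixOrder in
private lemma psd_eq_ct_mul_self {X : Matrix (Fin n) (Fin n) ℝ} (hX : X.PosSemidef) :
    ∃ B : Matrix (Fin n) (Fin n) ℝ, X = Bᴴ * B :=
  CStarAlgebra.nonneg_iff_eq_star_mul_self.mp hX.nonneg

/-- Decomposition of a PSD matrix annihilating `c` into rank-one pieces whose
vectors are orthogonal to `c`. -/
private lemma decomp_zero {X : Matrix (Fin n) (Fin n) ℝ} (hX : X.PosSemidef) {c : Fin n → ℝ}
    (hc : X *ᵥ c = 0) :
    ∃ v : Fin n → Fin n → ℝ, (∀ i, v i ⬝ᵥ c = 0) ∧ X = ∑ i, vecMulVec (v i) (v i) := by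
  obtain ⟨B, hB⟩ := psd_eq_ct_mul_self hX
  rw [conjTranspose_eq_transpose_of_trivial] at hB
  have hBc : B *ᵥ c = 0 := by
    have h0 : (B *ᵥ c) ⬝ᵥ (B *ᵥ c) = 0 := by
      have : c ⬝ᵥ (X *ᵥ c) = (B *ᵥ c) ⬝ᵥ (B *ᵥ c) := by
        rw [hB, ← mulVec_mulVec, dotProduct_mulVec, vecMul_transpose]
      rw [hc] at this
      simpa using this.symm
    exact dotProduct_self_eq_zero.mp h0
  refine ⟨fun i => B i, fun i => ?_, by rw [hB, tmul_eq_sum]⟩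
  have := congrFun hBc i
  simpa [mulVec, dotProduct] using this

end Aux

theorem stmt_13 {n : ℕ} (K : Set (Fin n → ℝ)) (hKconv : Convex ℝ K) (hKclosed : IsClosed K)
    (hKcone : ∀ x ∈ K, ∀ α : ℝ, 0 ≤ α → α • x ∈ K) (c : Fin n → ℝ) :
    ∀ S : Set (Matrix (Fin n) (Fin n) ℝ),
      S = {X | X.PosSemidef ∧ X.mulVec c ∈ K} →
      IsClosed S ∧ Convex ℝ S ∧ (∀ X ∈ S, ∀ α : ℝ, 0 ≤ α → α • X ∈ S) ∧ IsROG S := by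
  rintro S rfl
  set S : Set (Matrix (Fin n) (Fin n) ℝ) := {X | X.PosSemidef ∧ X.mulVec c ∈ K} with hS
  have hcone : ∀ X ∈ S, ∀ α : ℝ, 0 ≤ α → α • X ∈ S := by
    rintro X ⟨hX1, hX2⟩ α hα
    refine ⟨psd_smul hX1 hα, ?_⟩
    rw [smul_mulVec]
    exact hKcone _ hX2 _ hα
  have hconv : Convex ℝ S := by
    rintro X ⟨hX1, hX2⟩ Y ⟨hY1, hY2⟩ a b ha hb hab
    refine ⟨?_, ?_⟩
    · exact (psd_smul hX1 ha).add (psd_smul hY1 hb)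
    · rw [add_mulVec, smul_mulVec, smul_mulVec]
      exact hKconv hX2 hY2 ha hb hab
  have hclosed : IsClosed S := by
    have hmv : Continuous fun X : Matrix (Fin n) (Fin n) ℝ => X *ᵥ c := by
      refine continuous_pi fun i => ?_
      simp only [mulVec, dotProduct]
      exact continuous_finset_sum _ fun j _ =>
        (continuous_id.matrix_elem i j).mul continuous_const
    have h1 : IsClosed {X : Matrix (Fin n) (Fin n) ℝ | X.PosSemidef} := by
      have heq : {X : Matrix (Fin n) (Fin n) ℝ | X.PosSemidef} =
          {X | Xᴴ = X} ∩ ⋂ v : Fin n → ℝ, {X | 0 ≤ star v ⬝ᵥ X *ᵥ v} := by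
        ext X
        simp [Matrix.posSemidef_iff_dotProduct_mulVec, Matrix.IsHermitian, Set.mem_iInter]
      rw [heq]
      refine IsClosed.inter ?_ (isClosed_iInter fun v => ?_)
      · have hct : Continuous fun X : Matrix (Fin n) (Fin n) ℝ => Xᴴ := by
          refine continuous_pi fun i => continuous_pi fun j => ?_
          have : (fun X : Matrix (Fin n) (Fin n) ℝ => Xᴴ i j) =
              fun X => X j i := by
            funext X; simp [conjTranspose_apply]
          rw [this]
          exact (continuous_apply i).comp (continuous_apply j)
        exact isClosed_eq hct continuous_id
      · have hc2 : Continuous fun X : Matrix (Fin n) (Fin n) ℝ => star v ⬝ᵥ X *ᵥ v := by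
          simp only [dotProduct]
          refine continuous_finset_sum _ fun i _ => ?_
          refine Continuous.mul continuous_const ?_
          simp only [mulVec, dotProduct]
          exact continuous_finset_sum _ fun j _ =>
            (continuous_id.matrix_elem i j).mul continuous_const
        exact isClosed_le continuous_const hc2
    have : S = {X : Matrix (Fin n) (Fin n) ℝ | X.PosSemidef} ∩ (fun X => X *ᵥ c) ⁻¹' K := rfl
    rw [this]
    exact h1.inter (hKclosed.preimage hmv)
  refine ⟨hclosed, hconv, hcone, ?_⟩
  -- ROG
  have hsub : convexHull ℝ (S ∩ RankOneSet n) ⊆ S :=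
    convexHull_min Set.inter_subset_left hconv
  have hC : ∀ e ∈ S ∩ RankOneSet n, ∀ a : ℝ, 0 ≤ a → a • e ∈ S ∩ RankOneSet n := by
    rintro e ⟨heS, x, rfl⟩ a ha
    refine ⟨hcone _ heS a ha, Real.sqrt a • x, ?_⟩
    rw [vmv_smul, Real.mul_self_sqrt ha]
  refine Set.Subset.antisymm (fun X hXS => ?_) hsub
  obtain ⟨hX, hXc⟩ := hXS
  have h0K : (0 : Fin n → ℝ) ∈ K := by simpa using hKcone _ hXc 0 le_rfl
  obtain ⟨B, hB⟩ := psd_eq_ct_mul_self hX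
  rw [conjTranspose_eq_transpose_of_trivial] at hB
  have hdot : ∀ z u : Fin n → ℝ, z ⬝ᵥ (X *ᵥ u) = (B *ᵥ z) ⬝ᵥ (B *ᵥ u) := by
    intro z u
    rw [hB, ← mulVec_mulVec]
    rw [dotProduct_mulVec z Bᵀ (B *ᵥ u)]
    rw [vecMul_transpose]
  have key : ∃ v : Fin (n + 1) → Fin n → ℝ,
      X = ∑ i, vecMulVec (v i) (v i) ∧ ∀ i, vecMulVec (v i) (v i) ∈ S := by
    by_cases hq0 : B *ᵥ c = 0
    · have hXc0 : X *ᵥ c = 0 := by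
        rw [hB, ← mulVec_mulVec, hq0, mulVec_zero]
      obtain ⟨v, hv0, hvX⟩ := decomp_zero hX hXc0
      refine ⟨Fin.cons 0 v, ?_, ?_⟩
      · rw [Fin.sum_univ_succ]
        simp only [Fin.cons_zero, Fin.cons_succ]
        rw [← hvX]
        have : vecMulVec (0 : Fin n → ℝ) (0 : Fin n → ℝ) = (0 : Matrix (Fin n) (Fin n) ℝ) := by
          funext i j; simp [vecMulVec_apply]
        rw [this, zero_add]
      · intro i
        refine Fin.cases ?_ (fun j => ?_) i
        · simp only [Fin.cons_zero]
          refine ⟨vmv_psd 0, ?_⟩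
          rw [vmv_mulVec]
          simpa using h0K
        · simp only [Fin.cons_succ]
          refine ⟨vmv_psd _, ?_⟩
          rw [vmv_mulVec, hv0 j]
          simpa using h0K
    · set w : Fin n → ℝ := X *ᵥ c with hw
      set t : ℝ := c ⬝ᵥ w with ht
      have ht_eq : t = (B *ᵥ c) ⬝ᵥ (B *ᵥ c) := hdot c c
      have htz : t ≠ 0 := by
        rw [ht_eq]
        exact fun h => hq0 (dotProduct_self_eq_zero.mp h)
      have ht0 : 0 ≤ t := by
        have := hX.dotProduct_mulVec_nonneg c
        simpa using this
      have htpos : 0 < t := lt_of_le_of_ne ht0 (Ne.symm htz)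
      have hwc : w ⬝ᵥ c = t := by rw [ht, dotProduct_comm]
      set X' : Matrix (Fin n) (Fin n) ℝ := X - t⁻¹ • vecMulVec w w with hX'
      have hX'c : X' *ᵥ c = 0 := by
        rw [hX', sub_mulVec, smul_mulVec, vmv_mulVec, hwc, smul_smul,
          inv_mul_cancel₀ htz, one_smul, sub_self]
      have hX'psd : X'.PosSemidef := by
        refine Matrix.PosSemidef.of_dotProduct_mulVec_nonneg ?_ ?_
        · refine hX.1.sub ?_
          show (t⁻¹ • vecMulVec w w)ᴴ = t⁻¹ • vecMulVec w w
          rw [conjTranspose_smul, star_trivial, (vmv_psd w).1]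
        · intro z
          have hzz : star z = z := by simp
          rw [hzz, hX', sub_mulVec, dotProduct_sub, smul_mulVec, dotProduct_smul,
            vmv_mulVec, dotProduct_smul]
          simp only [smul_eq_mul]
          set p : Fin n → ℝ := B *ᵥ z with hp
          set q : Fin n → ℝ := B *ᵥ c with hqd
          have h1 : z ⬝ᵥ (X *ᵥ z) = p ⬝ᵥ p := hdot z z
          have h2 : z ⬝ᵥ w = p ⬝ᵥ q := hdot z c
          have h4 : w ⬝ᵥ z = p ⬝ᵥ q := by
            rw [dotProduct_comm]; exact h2
          have h3 : t = q ⬝ᵥ q := ht_eq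
          rw [h1, h2, h4]
          have hcs : (p ⬝ᵥ q) ^ 2 ≤ (p ⬝ᵥ p) * t := by
            have hcs0 := Finset.sum_mul_sq_le_sq_mul_sq Finset.univ p q
            rw [h3]
            simp only [dotProduct]
            calc (∑ i, p i * q i) ^ 2 ≤ (∑ i, p i ^ 2) * ∑ i, q i ^ 2 := hcs0
              _ = (∑ i, p i * p i) * (∑ i, q i * q i) := by
                  simp only [pow_two]
          have hfin : t⁻¹ * (p ⬝ᵥ q * (p ⬝ᵥ q)) ≤ p ⬝ᵥ p := by
            rw [← pow_two]
            calc t⁻¹ * (p ⬝ᵥ q) ^ 2 ≤ t⁻¹ * ((p ⬝ᵥ p) * t) :=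
                  mul_le_mul_of_nonneg_left hcs (inv_nonneg.mpr ht0)
              _ = p ⬝ᵥ p := by field_simp
          linarith
      obtain ⟨v, hv0, hvX'⟩ := decomp_zero hX'psd hX'c
      set y : Fin n → ℝ := (Real.sqrt t)⁻¹ • w with hy
      have hyy : vecMulVec y y = t⁻¹ • vecMulVec w w := by
        rw [hy, vmv_smul, ← mul_inv, Real.mul_self_sqrt ht0]
      refine ⟨Fin.cons y v, ?_, ?_⟩
      · rw [Fin.sum_univ_succ]
        simp only [Fin.cons_zero, Fin.cons_succ]
        rw [← hvX', hyy, hX']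
        abel
      · intro i
        refine Fin.cases ?_ (fun j => ?_) i
        · simp only [Fin.cons_zero]
          refine ⟨vmv_psd y, ?_⟩
          rw [hyy, smul_mulVec, vmv_mulVec, hwc, smul_smul, inv_mul_cancel₀ htz,
            one_smul]
          exact hXc
        · simp only [Fin.cons_succ]
          refine ⟨vmv_psd _, ?_⟩
          rw [vmv_mulVec, hv0 j]
          simpa using h0K
  obtain ⟨v, hXeq, hmem⟩ := key
  rw [hXeq]
  exact sum_mem_convexHull' hC (Nat.succ_pos n)
    (fun i => vecMulVec (v i) (v i))
    (fun i => ⟨hmem i, v i, rfl⟩)
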